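/- Let 0 < F₂ < F₁, F₂ < F₃ and 1 < A < B, with F(x) = F₁ for 0 ≤ x < A, F(x) = F₂ for A ≤ x < B, F(x) = F₃ for x ≥ B, and v(x) = 0 for all x ∈ [0,1]. If there are no collisions on [0,∞), then F₃ > F₁. -/

import Mathlib

open Set

noncomputable def twoStepTraj (F₁ F₂ F₃ A B x t : ℝ) : ℝ :=
  let TA := Real.sqrt (2 * (A - x) / F₁)
  let vA := F₁ * TA
  let s := (-vA + Real.sqrt (vA ^ 2 + 2 * F₂ * (B - A))) / F₂
  let TB := TA + s
  let vB := vA + F₂ * s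
  if t ≤ TA then x + F₁ * t ^ 2 / 2
  else if t ≤ TB then A + vA * (t - TA) + F₂ * (t - TA) ^ 2 / 2
  else B + vB * (t - TB) + F₃ * (t - TB) ^ 2 / 2

lemma twoStepTraj_eq (F₁ F₂ F₃ A B x t TA vA s TB vB : ℝ)
    (hTA : TA = Real.sqrt (2 * (A - x) / F₁)) (hvA : vA = F₁ * TA)
    (hs : s = (-vA + Real.sqrt (vA ^ 2 + 2 * F₂ * (B - A))) / F₂)
    (hTB : TB = TA + s) (hvB : vB = vA + F₂ * s) :
    twoStepTraj F₁ F₂ F₃ A B x t =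
      if t ≤ TA then x + F₁ * t ^ 2 / 2
      else if t ≤ TB then A + vA * (t - TA) + F₂ * (t - TA) ^ 2 / 2
      else B + vB * (t - TB) + F₃ * (t - TB) ^ 2 / 2 := by
  subst hvB hTB hs hvA hTA; rfl

lemma traj_facts (F₁ F₂ A B x TA vA D s TB : ℝ) (hF₁ : 0 < F₁) (hF₂ : 0 < F₂)
    (hxA : x < A) (hAB : A < B)
    (hTA : TA = Real.sqrt (2 * (A - x) / F₁)) (hvA : vA = F₁ * TA)
    (hD : D = Real.sqrt (vA ^ 2 + 2 * F₂ * (B - A)))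
    (hs : s = (-vA + D) / F₂) (hTB : TB = TA + s) :
    0 < TA ∧ x + F₁ * TA ^ 2 / 2 = A ∧ 0 < vA ∧ vA < D ∧ 0 < s ∧
      A + vA * s + F₂ * s ^ 2 / 2 = B ∧ vA ^ 2 = 2 * F₁ * (A - x) ∧
      D ^ 2 = vA ^ 2 + 2 * F₂ * (B - A) := by
  have harg : 0 < 2 * (A - x) / F₁ := by
    apply div_pos (by linarith) hF₁
  have hTA0 : 0 < TA := hTA ▸ Real.sqrt_pos.mpr harg
  have hTAsq : TA ^ 2 = 2 * (A - x) / F₁ := by rw [hTA, Real.sq_sqrt harg.le]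
  have h1 : x + F₁ * TA ^ 2 / 2 = A := by rw [hTAsq]; field_simp; ring
  have hvA0 : 0 < vA := by rw [hvA]; positivity
  have hvAsq : vA ^ 2 = 2 * F₁ * (A - x) := by
    rw [hvA, mul_pow, hTAsq]; field_simp
  have hDsq : D ^ 2 = vA ^ 2 + 2 * F₂ * (B - A) := by
    rw [hD, Real.sq_sqrt (by nlinarith [sq_nonneg vA])]
  have hD0 : 0 ≤ D := hD ▸ Real.sqrt_nonneg _
  have hvD : vA < D := by nlinarith
  have hs0 : 0 < s := by rw [hs]; apply div_pos (by linarith) hF₂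
  have hFs : F₂ * s = D - vA := by rw [hs]; field_simp; ring
  have h4 : F₂ * (vA * s + F₂ * s ^ 2 / 2) = F₂ * (B - A) := by
    linear_combination ((F₂ * s + D + vA) / 2) * hFs + (1 / 2) * hDsq
  have h3 : vA * s + F₂ * s ^ 2 / 2 = B - A := mul_left_cancel₀ hF₂.ne' h4
  exact ⟨hTA0, h1, hvA0, hvD, hs0, by linarith, hvAsq, hDsq⟩

lemma traj_cont (F₁ F₂ F₃ A B x : ℝ) (hF₁ : 0 < F₁) (hF₂ : 0 < F₂)
    (hxA : x < A) (hAB : A < B) :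
    Continuous (twoStepTraj F₁ F₂ F₃ A B x) := by
  obtain ⟨TA, hTA⟩ : ∃ a, a = Real.sqrt (2 * (A - x) / F₁) := ⟨_, rfl⟩
  obtain ⟨vA, hvA⟩ : ∃ a, a = F₁ * TA := ⟨_, rfl⟩
  obtain ⟨D, hD⟩ : ∃ a, a = Real.sqrt (vA ^ 2 + 2 * F₂ * (B - A)) := ⟨_, rfl⟩
  obtain ⟨s, hs⟩ : ∃ a, a = (-vA + D) / F₂ := ⟨_, rfl⟩
  obtain ⟨TB, hTB⟩ : ∃ a, a = TA + s := ⟨_, rfl⟩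
  obtain ⟨vB, hvB⟩ : ∃ a, a = vA + F₂ * s := ⟨_, rfl⟩
  obtain ⟨hTA0, h1, hvA0, hvD, hs0, h2, -, -⟩ :=
    traj_facts F₁ F₂ A B x TA vA D s TB hF₁ hF₂ hxA hAB hTA hvA hD hs hTB
  have heq : twoStepTraj F₁ F₂ F₃ A B x = fun t =>
      if t ≤ TA then x + F₁ * t ^ 2 / 2
      else if t ≤ TB then A + vA * (t - TA) + F₂ * (t - TA) ^ 2 / 2
      else B + vB * (t - TB) + F₃ * (t - TB) ^ 2 / 2 :=
    funext fun t => twoStepTraj_eq F₁ F₂ F₃ A B x t TA vA s TB vB hTA hvA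
      (by rw [hs, hD]) hTB hvB
  rw [heq]
  apply Continuous.if_le
  · fun_prop
  · apply Continuous.if_le
    · fun_prop
    · fun_prop
    · exact continuous_id
    · exact continuous_const
    · intro t ht
      subst ht
      linear_combination h2 + (vA + F₂ * (t - TA + s) / 2) * hTB
  · exact continuous_id
  · exact continuous_const
  · intro t ht
    rw [if_pos (by rw [ht]; linarith)]
    subst ht
    linear_combination h1

lemma traj_tail (F₁ F₂ F₃ A B x t TA vA s TB vB : ℝ)
    (hTA : TA = Real.sqrt (2 * (A - x) / F₁)) (hvA : vA = F₁ * TA)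
    (hs : s = (-vA + Real.sqrt (vA ^ 2 + 2 * F₂ * (B - A))) / F₂)
    (hTB : TB = TA + s) (hvB : vB = vA + F₂ * s)
    (hs0 : 0 ≤ s) (ht : TB < t) :
    twoStepTraj F₁ F₂ F₃ A B x t = B + vB * (t - TB) + F₃ * (t - TB) ^ 2 / 2 := by
  rw [twoStepTraj_eq F₁ F₂ F₃ A B x t TA vA s TB vB hTA hvA hs hTB hvB,
    if_neg (not_le.mpr (lt_of_le_of_lt (by linarith [hTB]) ht)),
    if_neg (not_le.mpr ht)]

set_option maxHeartbeats 1000000 in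
/-- Two gaps, particles starting at rest: for `0 < F₂ < F₁`, `F₂ < F₃`
and `1 < A < B`, if there are no collisions on `[0,∞)`, then `F₃ > F₁`. -/
theorem two_step_force_no_collisions_necessary
    (F₁ F₂ F₃ A B : ℝ)
    (hF₂ : 0 < F₂) (hF₁₂ : F₂ < F₁) (hF₂₃ : F₂ < F₃)
    (hA : 1 < A) (hAB : A < B)
    (hnc : ∀ t, 0 ≤ t → ∀ x₁ ∈ Icc (0:ℝ) 1, ∀ x₂ ∈ Icc (0:ℝ) 1, x₁ ≠ x₂ →
        twoStepTraj F₁ F₂ F₃ A B x₁ t ≠ twoStepTraj F₁ F₂ F₃ A B x₂ t) :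
    F₁ < F₃ := by
  by_contra hcon
  push_neg at hcon
  have hF₁ : 0 < F₁ := hF₂.trans hF₁₂
  obtain ⟨TA₀, hTA₀⟩ : ∃ a, a = Real.sqrt (2 * (A - 0) / F₁) := ⟨_, rfl⟩
  obtain ⟨vA₀, hvA₀⟩ : ∃ a, a = F₁ * TA₀ := ⟨_, rfl⟩
  obtain ⟨D₀, hD₀⟩ : ∃ a, a = Real.sqrt (vA₀ ^ 2 + 2 * F₂ * (B - A)) := ⟨_, rfl⟩
  obtain ⟨s₀, hs₀⟩ : ∃ a, a = (-vA₀ + D₀) / F₂ := ⟨_, rfl⟩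
  obtain ⟨TB₀, hTB₀⟩ : ∃ a, a = TA₀ + s₀ := ⟨_, rfl⟩
  obtain ⟨vB₀, hvB₀⟩ : ∃ a, a = vA₀ + F₂ * s₀ := ⟨_, rfl⟩
  obtain ⟨TA₁, hTA₁⟩ : ∃ a, a = Real.sqrt (2 * (A - 1) / F₁) := ⟨_, rfl⟩
  obtain ⟨vA₁, hvA₁⟩ : ∃ a, a = F₁ * TA₁ := ⟨_, rfl⟩
  obtain ⟨D₁, hD₁⟩ : ∃ a, a = Real.sqrt (vA₁ ^ 2 + 2 * F₂ * (B - A)) := ⟨_, rfl⟩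
  obtain ⟨s₁, hs₁⟩ : ∃ a, a = (-vA₁ + D₁) / F₂ := ⟨_, rfl⟩
  obtain ⟨TB₁, hTB₁⟩ : ∃ a, a = TA₁ + s₁ := ⟨_, rfl⟩
  obtain ⟨vB₁, hvB₁⟩ : ∃ a, a = vA₁ + F₂ * s₁ := ⟨_, rfl⟩
  obtain ⟨hTA₀p, -, hvA₀p, hvD₀, hs₀p, -, hvAsq₀, hDsq₀⟩ :=
    traj_facts F₁ F₂ A B 0 TA₀ vA₀ D₀ s₀ TB₀ hF₁ hF₂ (by linarith) hAB hTA₀ hvA₀ hD₀ hs₀ hTB₀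
  obtain ⟨hTA₁p, -, hvA₁p, hvD₁, hs₁p, -, hvAsq₁, hDsq₁⟩ :=
    traj_facts F₁ F₂ A B 1 TA₁ vA₁ D₁ s₁ TB₁ hF₁ hF₂ hA hAB hTA₁ hvA₁ hD₁ hs₁ hTB₁
  have hvB₀D : vB₀ = D₀ := by rw [hvB₀, hs₀]; field_simp; ring
  have hvB₁D : vB₁ = D₁ := by rw [hvB₁, hs₁]; field_simp; ring
  -- basic comparisons
  have hvAlt : vA₁ < vA₀ := by nlinarith
  have hTAlt : TA₁ < TA₀ := by
    rw [hvA₀, hvA₁] at hvAlt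
    exact (mul_lt_mul_iff_right₀ hF₁).mp hvAlt
  have hDdiff : D₀ - D₁ < vA₀ - vA₁ := by
    have hprod : (D₀ - D₁) * (D₀ + D₁) = (vA₀ - vA₁) * (vA₀ + vA₁) := by
      linear_combination hDsq₀ - hDsq₁
    have hsum : vA₀ + vA₁ < D₀ + D₁ := by linarith
    have h5 : (D₀ - D₁) * (D₀ + D₁) < (vA₀ - vA₁) * (D₀ + D₁) := by
      rw [hprod]
      exact mul_lt_mul_of_pos_left hsum (by linarith)
    exact lt_of_mul_lt_mul_right h5 (by linarith)
  -- the slope difference is positive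
  obtain ⟨Δg, hΔg⟩ : ∃ a, a = (D₀ - F₃ * TB₀) - (D₁ - F₃ * TB₁) := ⟨_, rfl⟩
  have key : F₂ * Δg = (F₂ - F₃) * (D₀ - D₁) + F₃ * (F₁ - F₂) * (TA₀ - TA₁) := by
    rw [hΔg, hTB₀, hs₀, hTB₁, hs₁, hvA₀, hvA₁]
    field_simp
    ring
  have e1 : (F₂ - F₃) * (vA₀ - vA₁) < (F₂ - F₃) * (D₀ - D₁) :=
    mul_lt_mul_of_neg_left hDdiff (by linarith)
  have e2 : vA₀ - vA₁ = F₁ * (TA₀ - TA₁) := by rw [hvA₀, hvA₁]; ring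
  have e3 : 0 ≤ (F₁ - F₃) * (TA₀ - TA₁) :=
    mul_nonneg (by linarith) (by linarith)
  have e4 : (F₂ - F₃) * (vA₀ - vA₁) =
      F₂ * ((F₁ - F₃) * (TA₀ - TA₁)) - F₃ * (F₁ - F₂) * (TA₀ - TA₁) := by
    linear_combination (F₂ - F₃) * e2
  have e5 : 0 ≤ F₂ * ((F₁ - F₃) * (TA₀ - TA₁)) := mul_nonneg hF₂.le e3
  have h6 : 0 < F₂ * Δg := by linarith only [key, e1, e4, e5]
  have hΔgp : 0 < Δg := by
    have h6' : Δg = F₂ * Δg / F₂ := by field_simp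
    rw [h6']
    exact div_pos h6 hF₂
  -- choose a large time T
  obtain ⟨C, hC⟩ : ∃ a, a = (D₁ * TB₁ - D₀ * TB₀) + F₃ * (TB₀ ^ 2 - TB₁ ^ 2) / 2 := ⟨_, rfl⟩
  obtain ⟨T, hT⟩ : ∃ a, a = max TB₀ TB₁ + 1 + |C| / Δg := ⟨_, rfl⟩
  have habs : 0 ≤ |C| / Δg := div_nonneg (abs_nonneg C) hΔgp.le
  have hT₀ : TB₀ < T := by
    have := le_max_left TB₀ TB₁; rw [hT]; linarith
  have hT₁ : TB₁ < T := by
    have := le_max_right TB₀ TB₁; rw [hT]; linarith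
  have hTpos : 0 ≤ T := by linarith [hTB₀ ▸ (by linarith : 0 < TA₀ + s₀)]
  -- values at T
  have hy₀ : twoStepTraj F₁ F₂ F₃ A B 0 T = B + D₀ * (T - TB₀) + F₃ * (T - TB₀) ^ 2 / 2 := by
    rw [traj_tail F₁ F₂ F₃ A B 0 T TA₀ vA₀ s₀ TB₀ vB₀ hTA₀ hvA₀ (by rw [hs₀, hD₀])
      hTB₀ hvB₀ hs₀p.le hT₀, hvB₀D]
  have hy₁ : twoStepTraj F₁ F₂ F₃ A B 1 T = B + D₁ * (T - TB₁) + F₃ * (T - TB₁) ^ 2 / 2 := by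
    rw [traj_tail F₁ F₂ F₃ A B 1 T TA₁ vA₁ s₁ TB₁ vB₁ hTA₁ hvA₁ (by rw [hs₁, hD₁])
      hTB₁ hvB₁ hs₁p.le hT₁, hvB₁D]
  have hdiffT : twoStepTraj F₁ F₂ F₃ A B 0 T - twoStepTraj F₁ F₂ F₃ A B 1 T = Δg * T + C := by
    rw [hy₀, hy₁, hΔg, hC]; ring
  have hposT : 0 < twoStepTraj F₁ F₂ F₃ A B 0 T - twoStepTraj F₁ F₂ F₃ A B 1 T := by
    rw [hdiffT]
    have h7 : Δg * (|C| / Δg) = |C| := mul_div_cancel₀ |C| hΔgp.ne'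
    have h8 : 0 < Δg * (max TB₀ TB₁ + 1) := mul_pos hΔgp (by
      have := le_max_left TB₀ TB₁
      have h9 : 0 < TB₀ := by rw [hTB₀]; linarith
      linarith)
    have h10 : -C ≤ |C| := neg_le_abs C
    have h11 : Δg * T = Δg * (max TB₀ TB₁ + 1) + |C| := by
      rw [hT, mul_add, h7]
    linarith
  -- value at time 0
  have hzero : ∀ y : ℝ, twoStepTraj F₁ F₂ F₃ A B y 0 = y := by
    intro y
    rw [twoStepTraj_eq F₁ F₂ F₃ A B y 0 _ _ _ _ _ rfl rfl rfl rfl rfl,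
      if_pos (Real.sqrt_nonneg _)]
    ring
  -- continuity of the difference
  have hcont : Continuous
      (fun t => twoStepTraj F₁ F₂ F₃ A B 0 t - twoStepTraj F₁ F₂ F₃ A B 1 t) :=
    (traj_cont F₁ F₂ F₃ A B 0 hF₁ hF₂ (by linarith) hAB).sub
      (traj_cont F₁ F₂ F₃ A B 1 hF₁ hF₂ hA hAB)
  -- intermediate value theorem gives a collision
  have hmem : (0:ℝ) ∈ Icc (twoStepTraj F₁ F₂ F₃ A B 0 0 - twoStepTraj F₁ F₂ F₃ A B 1 0)
      (twoStepTraj F₁ F₂ F₃ A B 0 T - twoStepTraj F₁ F₂ F₃ A B 1 T) := by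
    constructor
    · rw [hzero 0, hzero 1]; norm_num
    · exact hposT.le
  obtain ⟨t, htmem, htval⟩ := intermediate_value_Icc hTpos hcont.continuousOn hmem
  exact hnc t htmem.1 0 ⟨le_rfl, zero_le_one⟩ 1 ⟨zero_le_one, le_rfl⟩ (by norm_num)
    (sub_eq_zero.mp htval)
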